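/- Let φ(z) = ∑_{n≥0} φ_n z^n be a complex power series converging absolutely on the open disk of radius R, and let f ∈ S̃_{-1} with |E[f]| < R/B₂. Then the series ∑_{n≥0} φ_n f^{⊗n} converges in some L²(ℓ̃, μ_{-p}), hence defines an element of S̃_{-1}. -/

import Mathlib

/-- Weight `(2ℕ)^α = ∏_k (2 i_k)` of a word (letter `i` represents `z_{i+1}`). -/
noncomputable def ncWeight (α : FreeMonoid ℕ) : ℝ :=
  (FreeMonoid.toList α |>.map (fun i => (2 * (i + 1) : ℝ))).prod

/-- Wick product: monoid convolution `(f ⊗ g)_γ = ∑_{αβ = γ} f_α g_β`. -/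
noncomputable def wick (f g : FreeMonoid ℕ → ℂ) (γ : FreeMonoid ℕ) : ℂ :=
  ∑ j ∈ Finset.range ((FreeMonoid.toList γ).length + 1),
    f (FreeMonoid.ofList ((FreeMonoid.toList γ).take j)) *
      g (FreeMonoid.ofList ((FreeMonoid.toList γ).drop j))

/-- Wick powers: iterated convolutions, `f^{⊗0}` the indicator of the empty word. -/
noncomputable def wickPow (f : FreeMonoid ℕ → ℂ) : ℕ → FreeMonoid ℕ → ℂ
  | 0 => fun γ => if FreeMonoid.toList γ = [] then 1 else 0
  | n + 1 => wick f (wickPow f n)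

open scoped ENNReal NNReal Real
open Finset

namespace WickAux

/-! ### Elementary weights -/

noncomputable def vw (i : ℕ) : ℝ≥0 := ((2 : ℝ≥0) * (i + 1))⁻¹

lemma vw_pos (i : ℕ) : 0 < vw i := by
  rw [vw]
  positivity

lemma vw_ne_zero (i : ℕ) : vw i ≠ 0 := (vw_pos i).ne'

lemma vw_le_half (i : ℕ) : vw i ≤ 2⁻¹ := by
  rw [vw]
  rw [mul_inv]
  calc (2 : ℝ≥0)⁻¹ * ((i : ℝ≥0) + 1)⁻¹ ≤ 2⁻¹ * 1 := by
        gcongr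
        simp [inv_le_one_iff₀]
    _ = 2⁻¹ := mul_one _

lemma vw_le_one (i : ℕ) : vw i ≤ 1 := (vw_le_half i).trans (by norm_num)

noncomputable def iw (l : List ℕ) : ℝ≥0 := (l.map vw).prod

@[simp] lemma iw_nil : iw [] = 1 := rfl

lemma iw_cons (i : ℕ) (l : List ℕ) : iw (i :: l) = vw i * iw l := by simp [iw]

lemma iw_append (a b : List ℕ) : iw (a ++ b) = iw a * iw b := by simp [iw]

lemma iw_pos (l : List ℕ) : 0 < iw l := by
  induction l with
  | nil => simp
  | cons i t ih => rw [iw_cons]; exact mul_pos (vw_pos i) ih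

lemma iw_ne_zero (l : List ℕ) : iw l ≠ 0 := (iw_pos l).ne'

lemma iw_le_one (l : List ℕ) : iw l ≤ 1 := by
  induction l with
  | nil => simp
  | cons i t ih => rw [iw_cons]; exact mul_le_one' (vw_le_one i) ih

lemma iw_le_half {l : List ℕ} (h : l ≠ []) : iw l ≤ 2⁻¹ := by
  cases l with
  | nil => exact absurd rfl h
  | cons i t =>
    rw [iw_cons]
    calc vw i * iw t ≤ 2⁻¹ * 1 := mul_le_mul' (vw_le_half i) (iw_le_one t)
      _ = 2⁻¹ := mul_one _

lemma ncWeight_ofList_cons (i : ℕ) (t : List ℕ) :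
    ncWeight (FreeMonoid.ofList (i :: t)) = (2 * ((i : ℝ) + 1)) * ncWeight (FreeMonoid.ofList t) := by
  simp [ncWeight]

lemma iw_mul_ncWeight (l : List ℕ) : (iw l : ℝ) * ncWeight (FreeMonoid.ofList l) = 1 := by
  induction l with
  | nil => simp [ncWeight]
  | cons i t ih =>
    rw [ncWeight_ofList_cons, iw_cons]
    push_cast
    have h1 : (vw i : ℝ) * (2 * ((i : ℝ) + 1)) = 1 := by
      rw [vw]
      push_cast
      rw [inv_mul_cancel₀ (by positivity)]
    calc (vw i : ℝ) * (iw t : ℝ) * ((2 * ((i : ℝ) + 1)) * ncWeight (FreeMonoid.ofList t))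
        = ((vw i : ℝ) * (2 * ((i : ℝ) + 1))) * ((iw t : ℝ) * ncWeight (FreeMonoid.ofList t)) := by
          ring
      _ = 1 := by rw [h1, ih, one_mul]

lemma ncWeight_pos (γ : FreeMonoid ℕ) : 0 < ncWeight γ := by
  have h := iw_mul_ncWeight (FreeMonoid.toList γ)
  rw [FreeMonoid.ofList_toList] at h
  nlinarith [iw_pos (FreeMonoid.toList γ), (iw (FreeMonoid.toList γ)).coe_nonneg]

lemma iw_eq_inv (γ : FreeMonoid ℕ) : (iw (FreeMonoid.toList γ) : ℝ) = (ncWeight γ)⁻¹ := by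
  have h := iw_mul_ncWeight (FreeMonoid.toList γ)
  rw [FreeMonoid.ofList_toList] at h
  exact eq_inv_of_mul_eq_one_left h

lemma weight_pow (γ : FreeMonoid ℕ) (p : ℕ) :
    ncWeight γ ^ (-(p : ℤ)) = ((iw (FreeMonoid.toList γ) ^ p : ℝ≥0) : ℝ) := by
  rw [zpow_neg, zpow_natCast, ← inv_pow, ← iw_eq_inv]
  push_cast
  rfl

/-! ### Cauchy–Schwarz inequalities -/

lemma nnreal_CS {ι : Type*} (s : Finset ι) (b d : ι → ℝ≥0) :
    (∑ i ∈ s, b i * d i) ^ 2 ≤ (∑ i ∈ s, (b i) ^ 2) * ∑ i ∈ s, (d i) ^ 2 := by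
  rw [← NNReal.coe_le_coe]
  push_cast
  exact Finset.sum_mul_sq_le_sq_mul_sq s _ _

lemma nnreal_CS_div {ι : Type*} (s : Finset ι) (a c : ι → ℝ≥0)
    (h0 : ∀ i ∈ s, c i = 0 → a i = 0) :
    (∑ i ∈ s, a i) ^ 2 ≤ (∑ i ∈ s, c i) * ∑ i ∈ s, (a i) ^ 2 / c i := by
  have key : ∀ i ∈ s, a i = NNReal.sqrt (c i) * (a i / NNReal.sqrt (c i)) := by
    intro i hi
    rcases eq_or_ne (c i) 0 with h | h
    · simp [h, h0 i hi h]
    · rw [mul_div_cancel₀]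
      simpa using h
  calc (∑ i ∈ s, a i) ^ 2 = (∑ i ∈ s, NNReal.sqrt (c i) * (a i / NNReal.sqrt (c i))) ^ 2 := by
        rw [Finset.sum_congr rfl key]
    _ ≤ (∑ i ∈ s, NNReal.sqrt (c i) ^ 2) * ∑ i ∈ s, (a i / NNReal.sqrt (c i)) ^ 2 :=
        nnreal_CS s _ _
    _ = (∑ i ∈ s, c i) * ∑ i ∈ s, (a i) ^ 2 / c i := by
        congr 1 <;> refine Finset.sum_congr rfl fun i hi => ?_
        · exact NNReal.sq_sqrt _
        · rw [div_pow, NNReal.sq_sqrt]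

lemma ennreal_CS_finset {ι : Type*} (s : Finset ι) (a c : ι → ℝ≥0∞)
    (hct : ∀ i ∈ s, c i ≠ ∞) (h0 : ∀ i ∈ s, c i = 0 → a i = 0) :
    (∑ i ∈ s, a i) ^ 2 ≤ (∑ i ∈ s, c i) * ∑ i ∈ s, (a i) ^ 2 / c i := by
  by_cases ha : ∀ i ∈ s, a i ≠ ∞
  · have key : ∀ i ∈ s, a i = ((a i).toNNReal : ℝ≥0∞) := fun i hi =>
      (ENNReal.coe_toNNReal (ha i hi)).symm
    have keyc : ∀ i ∈ s, c i = ((c i).toNNReal : ℝ≥0∞) := fun i hi =>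
      (ENNReal.coe_toNNReal (hct i hi)).symm
    have h0' : ∀ i ∈ s, (c i).toNNReal = 0 → (a i).toNNReal = 0 := by
      intro i hi h
      have : c i = 0 := by
        rw [keyc i hi, h]; rfl
      rw [h0 i hi this]; rfl
    calc (∑ i ∈ s, a i) ^ 2 = (((∑ i ∈ s, (a i).toNNReal) : ℝ≥0) : ℝ≥0∞) ^ 2 := by
          rw [ENNReal.coe_finset_sum]
          congr 1
          exact Finset.sum_congr rfl key
      _ = ((((∑ i ∈ s, (a i).toNNReal) ^ 2 : ℝ≥0)) : ℝ≥0∞) := by push_cast; rfl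
      _ ≤ ((((∑ i ∈ s, (c i).toNNReal) * ∑ i ∈ s, ((a i).toNNReal) ^ 2 / (c i).toNNReal : ℝ≥0)) : ℝ≥0∞) := by
          exact_mod_cast ENNReal.coe_le_coe.2 (nnreal_CS_div s _ _ h0')
      _ = (∑ i ∈ s, c i) * ∑ i ∈ s, (a i) ^ 2 / c i := by
          rw [ENNReal.coe_mul, ENNReal.coe_finset_sum, ENNReal.coe_finset_sum]
          congr 1
          · exact (Finset.sum_congr rfl keyc).symm
          · refine (Finset.sum_congr rfl fun i hi => ?_).symm
            rcases eq_or_ne (c i) 0 with h | h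
            · simp [h, h0 i hi h]
            · have hc' : (c i).toNNReal ≠ 0 := by
                simp [ENNReal.toNNReal_eq_zero_iff, h, hct i hi]
              rw [ENNReal.coe_div hc', ENNReal.coe_pow, ← key i hi, ← keyc i hi]
  · push_neg at ha
    obtain ⟨i₀, hi₀, hai₀⟩ := ha
    have hc₀ : c i₀ ≠ 0 := by
      intro h
      rw [h0 i₀ hi₀ h] at hai₀
      exact (ENNReal.zero_ne_top) hai₀
    have hterm : (a i₀) ^ 2 / c i₀ = ∞ := by
      rw [hai₀]
      rw [ENNReal.top_pow (by norm_num), ENNReal.top_div_of_ne_top (hct i₀ hi₀)]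
    have hsum2 : ∑ i ∈ s, (a i) ^ 2 / c i = ∞ := by
      rw [eq_top_iff, ← hterm]
      exact Finset.single_le_sum (f := fun i => (a i) ^ 2 / c i) (fun _ _ => zero_le) hi₀
    have hsum1 : c i₀ ≤ ∑ i ∈ s, c i := Finset.single_le_sum (fun _ _ => zero_le) hi₀
    rw [hsum2, ENNReal.mul_top (fun h => hc₀ (le_antisymm (h ▸ hsum1) zero_le))]
    exact le_top

lemma ennreal_CS_tsum {ι : Type*} (a c : ι → ℝ≥0∞) (hct : ∀ i, c i ≠ ∞)
    (h0 : ∀ i, c i = 0 → a i = 0) :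
    (∑' i, a i) ^ 2 ≤ (∑' i, c i) * ∑' i, (a i) ^ 2 / c i := by
  classical
  rw [sq, ENNReal.tsum_eq_iSup_sum]
  rw [ENNReal.iSup_mul]
  refine iSup_le fun s => ?_
  rw [ENNReal.mul_iSup]
  refine iSup_le fun t => ?_
  calc (∑ i ∈ s, a i) * ∑ i ∈ t, a i
      ≤ (∑ i ∈ s ∪ t, a i) * ∑ i ∈ s ∪ t, a i :=
        mul_le_mul' (Finset.sum_le_sum_of_subset Finset.subset_union_left)
          (Finset.sum_le_sum_of_subset Finset.subset_union_right)
    _ = (∑ i ∈ s ∪ t, a i) ^ 2 := (sq _).symm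
    _ ≤ (∑ i ∈ s ∪ t, c i) * ∑ i ∈ s ∪ t, (a i) ^ 2 / c i :=
        ennreal_CS_finset _ _ _ (fun i _ => hct i) (fun i _ => h0 i)
    _ ≤ (∑' i, c i) * ∑' i, (a i) ^ 2 / c i := by
        gcongr <;> exact ENNReal.sum_le_tsum _

/-! ### Splitting identity -/

def splitEquiv : (List ℕ × List ℕ) ≃ (Σ l : List ℕ, Fin (l.length + 1)) where
  toFun p := ⟨p.1 ++ p.2, ⟨p.1.length, by simp [Nat.lt_succ_iff]⟩⟩
  invFun σ := (σ.1.take σ.2, σ.1.drop σ.2)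
  left_inv p := by simp [List.take_left, List.drop_left]
  right_inv := by
    rintro ⟨l, j⟩
    dsimp only
    have h1 : l.take j ++ l.drop j = l := List.take_append_drop _ _
    have hj : (j : ℕ) ≤ l.length := Nat.lt_succ_iff.mp j.isLt
    refine Sigma.ext h1 ?_
    rw [Fin.heq_ext_iff (by simp [h1])]
    simp [List.length_take, min_eq_left hj]

lemma tsum_split (H : List ℕ → List ℕ → ℝ≥0∞) :
    (∑' l : List ℕ, ∑ j ∈ Finset.range (l.length + 1), H (l.take j) (l.drop j))
      = ∑' a : List ℕ, ∑' b : List ℕ, H a b := by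
  have h1 : ∀ l : List ℕ, (∑ j ∈ Finset.range (l.length + 1), H (l.take j) (l.drop j))
      = ∑' j : Fin (l.length + 1), H (l.take j) (l.drop j) := fun l => by
    rw [tsum_fintype]
    exact (Fin.sum_univ_eq_sum_range _ _).symm
  simp_rw [h1]
  rw [← ENNReal.tsum_sigma' (fun σ : Σ l : List ℕ, Fin (l.length + 1) => H (σ.1.take σ.2) (σ.1.drop σ.2))]
  rw [← Equiv.tsum_eq splitEquiv (fun σ : Σ l : List ℕ, Fin (l.length + 1) => H (σ.1.take σ.2) (σ.1.drop σ.2))]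
  rw [ENNReal.tsum_prod']
  congr 1
  funext a
  congr 1
  funext b
  simp [splitEquiv, List.take_left, List.drop_left]

/-! ### Constants -/

noncomputable def zeta2 : ℝ := ∑' n : ℕ, ((n + 1 : ℝ)) ^ (-2 : ℤ)

lemma hasSum_zeta2 : HasSum (fun n : ℕ => ((n + 1 : ℝ)) ^ (-2 : ℤ)) (π ^ 2 / 6) := by
  have h := hasSum_zeta_two
  rw [← hasSum_nat_add_iff' 1] at h
  simpa [zpow_neg, zpow_ofNat, one_div] using h

lemma summable_zeta2 : Summable (fun n : ℕ => ((n + 1 : ℝ)) ^ (-2 : ℤ)) :=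
  hasSum_zeta2.summable

lemma zeta2_eq : zeta2 = π ^ 2 / 6 := hasSum_zeta2.tsum_eq

lemma zeta2_nonneg : 0 ≤ zeta2 := by
  rw [zeta2_eq]; positivity

lemma zeta2_lt_four : zeta2 < 4 := by
  rw [zeta2_eq]
  have h1 := Real.pi_lt_d2
  have h2 := Real.pi_gt_three
  nlinarith

lemma quarter_zeta_lt_one : (2 : ℝ) ^ (-2 : ℤ) * zeta2 < 1 := by
  have := zeta2_lt_four
  norm_num
  linarith

lemma one_sub_pos' : 0 < 1 - (2 : ℝ) ^ (-2 : ℤ) * zeta2 := by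
  have := quarter_zeta_lt_one
  linarith

noncomputable def B2sq : ℝ := (1 - (2 : ℝ) ^ (-2 : ℤ) * zeta2)⁻¹

lemma B2sq_pos : 0 < B2sq := inv_pos.2 one_sub_pos'

noncomputable def sE : ℝ≥0∞ := ∑' i : ℕ, ((vw i : ℝ≥0∞)) ^ 2

lemma zpow_neg_two (x : ℝ) : x ^ (-2 : ℤ) = (x ^ 2)⁻¹ := by
  rw [show (-2 : ℤ) = -(2 : ℤ) from rfl, zpow_neg, zpow_two, sq]

lemma vw_sq_real (i : ℕ) : ((vw i : ℝ)) ^ 2 = (2 : ℝ) ^ (-2 : ℤ) * ((i + 1 : ℝ)) ^ (-2 : ℤ) := by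
  have h : ((i : ℝ) + 1) ≠ 0 := by positivity
  rw [vw]
  push_cast
  rw [zpow_neg_two, zpow_neg_two, inv_pow, mul_pow, mul_inv]

lemma sE_eq : sE = ENNReal.ofReal ((2 : ℝ) ^ (-2 : ℤ) * zeta2) := by
  rw [sE]
  have h1 : ∀ i : ℕ, ((vw i : ℝ≥0∞)) ^ 2
      = ENNReal.ofReal ((2 : ℝ) ^ (-2 : ℤ) * ((i + 1 : ℝ)) ^ (-2 : ℤ)) := by
    intro i
    rw [← vw_sq_real, ENNReal.ofReal_pow (vw i).coe_nonneg, ENNReal.ofReal_coe_nnreal]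
  simp_rw [h1]
  rw [← ENNReal.ofReal_tsum_of_nonneg (fun n => by positivity)
    (summable_zeta2.mul_left _)]
  rw [zeta2, tsum_mul_left]

lemma sE_lt_one : sE < 1 := by
  rw [sE_eq, ← ENNReal.ofReal_one]
  exact ENNReal.ofReal_lt_ofReal_iff_of_nonneg (mul_nonneg (by positivity) zeta2_nonneg) |>.2 quarter_zeta_lt_one

noncomputable def TE : ℝ≥0∞ := ∑' l : List ℕ, ((iw l : ℝ≥0∞)) ^ 2

lemma tsum_pi_prod (g : ℕ → ℝ≥0∞) :
    ∀ n, (∑' x : Fin n → ℕ, ∏ i, g (x i)) = (∑' i, g i) ^ n := by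
  intro n
  induction n with
  | zero =>
    rw [tsum_eq_single (fun i : Fin 0 => i.elim0) (fun b hb => (hb (funext fun i => i.elim0)).elim)]
    simp
  | succ n ih =>
    rw [← Equiv.tsum_eq (Fin.consEquiv (fun _ : Fin (n + 1) => ℕ)) (fun x => ∏ i, g (x i))]
    rw [ENNReal.tsum_prod']
    have hinner : ∀ (a : ℕ) (x : Fin n → ℕ),
        (∏ i, g ((Fin.consEquiv (fun _ : Fin (n + 1) => ℕ)) (a, x) i)) = g a * ∏ i, g (x i) := by
      intro a x
      rw [Fin.prod_univ_succ]
      simp [Fin.consEquiv]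
    simp_rw [hinner]
    simp_rw [ENNReal.tsum_mul_left]
    rw [ih, ENNReal.tsum_mul_right, pow_succ, mul_comm]

lemma TE_eq : TE = ENNReal.ofReal B2sq := by
  have h1 : TE = ∑' n : ℕ, sE ^ n := by
    rw [TE]
    rw [← Equiv.tsum_eq List.equivSigmaTuple.symm (fun l : List ℕ => ((iw l : ℝ≥0∞)) ^ 2)]
    rw [ENNReal.tsum_sigma' (fun σ : Σ n, Fin n → ℕ => ((iw (List.equivSigmaTuple.symm σ) : ℝ≥0∞)) ^ 2)]
    congr 1
    funext n
    have h2 : ∀ x : Fin n → ℕ,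
        ((iw (List.equivSigmaTuple.symm ⟨n, x⟩) : ℝ≥0∞)) ^ 2 = ∏ i, ((vw (x i) : ℝ≥0∞)) ^ 2 := by
      intro x
      have : iw (List.equivSigmaTuple.symm ⟨n, x⟩) = ∏ i, vw (x i) := by
        show iw (List.ofFn x) = _
        rw [iw, List.map_ofFn, List.prod_ofFn]
        rfl
      rw [this]
      push_cast
      rw [← Finset.prod_pow]
    simp_rw [h2]
    exact tsum_pi_prod (fun i => ((vw i : ℝ≥0∞)) ^ 2) n
  rw [h1, ENNReal.tsum_geometric, sE_eq, B2sq]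
  rw [← ENNReal.ofReal_one, ← ENNReal.ofReal_sub _ (mul_nonneg (by positivity) zeta2_nonneg)]
  rw [ENNReal.ofReal_inv_of_pos one_sub_pos']

lemma TE_ne_top : TE ≠ ∞ := by
  rw [TE_eq]; exact ENNReal.ofReal_ne_top

/-! ### L² quantities -/

noncomputable def EL (p : ℕ) (F : List ℕ → ℂ) : ℝ≥0∞ :=
  ∑' l : List ℕ, ((‖F l‖₊ ^ 2 * iw l ^ p : ℝ≥0) : ℝ≥0∞)

lemma summand_eq (f : FreeMonoid ℕ → ℂ) (p : ℕ) (γ : FreeMonoid ℕ) :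
    ‖f γ‖ ^ 2 * ncWeight γ ^ (-(p : ℤ)) = ((‖f γ‖₊ ^ 2 * iw (FreeMonoid.toList γ) ^ p : ℝ≥0) : ℝ) := by
  rw [weight_pow]
  push_cast
  rfl

lemma bridge_summable (f : FreeMonoid ℕ → ℂ) (p : ℕ) :
    Summable (fun γ : FreeMonoid ℕ => ‖f γ‖ ^ 2 * ncWeight γ ^ (-(p : ℤ))) ↔
      EL p (fun l => f (FreeMonoid.ofList l)) ≠ ∞ := by
  have e1 : Summable (fun γ : FreeMonoid ℕ => ‖f γ‖ ^ 2 * ncWeight γ ^ (-(p : ℤ)))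
      ↔ Summable (fun l : List ℕ => ((‖f (FreeMonoid.ofList l)‖₊ ^ 2 * iw l ^ p : ℝ≥0) : ℝ)) := by
    rw [← Equiv.summable_iff (FreeMonoid.ofList (α := ℕ))]
    refine summable_congr fun l => ?_
    show ‖f (FreeMonoid.ofList l)‖ ^ 2 * ncWeight (FreeMonoid.ofList l) ^ (-(p : ℤ)) = _
    simpa using summand_eq f p (FreeMonoid.ofList l)
  rw [e1, NNReal.summable_coe]
  exact (ENNReal.tsum_coe_ne_top_iff_summable).symm

lemma bridge_tsum (f : FreeMonoid ℕ → ℂ) (p : ℕ) :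
    (∑' γ : FreeMonoid ℕ, ‖f γ‖ ^ 2 * ncWeight γ ^ (-(p : ℤ)))
      = (EL p (fun l => f (FreeMonoid.ofList l))).toReal := by
  rw [← Equiv.tsum_eq (FreeMonoid.ofList (α := ℕ)) (fun γ => ‖f γ‖ ^ 2 * ncWeight γ ^ (-(p : ℤ)))]
  rw [EL, ENNReal.tsum_toReal_eq (fun l => ENNReal.coe_ne_top)]
  congr 1
  funext l
  rw [ENNReal.coe_toReal]
  simpa using summand_eq f p (FreeMonoid.ofList l)

/-! ### List-level Wick products -/

noncomputable def LW (F G : List ℕ → ℂ) (l : List ℕ) : ℂ :=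
  ∑ j ∈ Finset.range (l.length + 1), F (l.take j) * G (l.drop j)

noncomputable def LP (F : List ℕ → ℂ) : ℕ → List ℕ → ℂ
  | 0 => fun l => if l = [] then 1 else 0
  | n + 1 => LW F (LP F n)

lemma wick_ofList (f g : FreeMonoid ℕ → ℂ) (l : List ℕ) :
    wick f g (FreeMonoid.ofList l) =
      LW (fun a => f (FreeMonoid.ofList a)) (fun b => g (FreeMonoid.ofList b)) l := rfl

lemma wickPow_ofList (f : FreeMonoid ℕ → ℂ) :
    ∀ (n : ℕ) (l : List ℕ),
      wickPow f n (FreeMonoid.ofList l) = LP (fun a => f (FreeMonoid.ofList a)) n l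
  | 0, l => rfl
  | (n+1), l => by
    show wick f (wickPow f n) (FreeMonoid.ofList l) = LW _ (LP _ n) l
    rw [wick_ofList]
    unfold LW
    exact Finset.sum_congr rfl fun j _ => by
      have h := wickPow_ofList f n (l.drop j)
      simp only [h]

/-! ### The convolution estimate -/

lemma prefix_le (l : List ℕ) :
    (∑ j ∈ Finset.range (l.length + 1), ((iw (l.take j) : ℝ≥0∞)) ^ 2) ≤ TE := by
  classical
  have hinj : ∀ a ∈ Finset.range (l.length + 1), ∀ b ∈ Finset.range (l.length + 1),
      l.take a = l.take b → a = b := by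
    intro a ha b hb hab
    have ha' := Nat.lt_succ_iff.mp (Finset.mem_range.mp ha)
    have hb' := Nat.lt_succ_iff.mp (Finset.mem_range.mp hb)
    have := congrArg List.length hab
    simpa [List.length_take, min_eq_left ha', min_eq_left hb'] using this
  rw [← Finset.sum_image (g := fun j => l.take j) (f := fun m => ((iw m : ℝ≥0∞)) ^ 2) hinj]
  exact ENNReal.sum_le_tsum _

lemma lw_pointwise (F G : List ℕ → ℂ) (q : ℕ) (l : List ℕ) :
    (‖LW F G l‖₊ ^ 2 * iw l ^ (q + 2) : ℝ≥0) ≤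
      (∑ j ∈ Finset.range (l.length + 1), iw (l.take j) ^ 2) *
      ∑ j ∈ Finset.range (l.length + 1),
        (‖F (l.take j)‖₊ ^ 2 * iw (l.take j) ^ q) *
        (‖G (l.drop j)‖₊ ^ 2 * iw (l.drop j) ^ (q + 2)) := by
  have h1 : ‖LW F G l‖₊ ≤ ∑ j ∈ Finset.range (l.length + 1), ‖F (l.take j)‖₊ * ‖G (l.drop j)‖₊ := by
    refine (nnnorm_sum_le _ _).trans (le_of_eq ?_)
    exact Finset.sum_congr rfl fun j _ => nnnorm_mul _ _
  have h2 : (‖LW F G l‖₊) ^ 2 * iw l ^ (q + 2) ≤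
      (∑ j ∈ Finset.range (l.length + 1), ‖F (l.take j)‖₊ * ‖G (l.drop j)‖₊) ^ 2 * iw l ^ (q + 2) := by
    gcongr
  refine h2.trans ?_
  have hCS : (∑ j ∈ Finset.range (l.length + 1), ‖F (l.take j)‖₊ * ‖G (l.drop j)‖₊) ^ 2 ≤
      (∑ j ∈ Finset.range (l.length + 1), iw (l.take j) ^ 2) *
      ∑ j ∈ Finset.range (l.length + 1),
        (‖F (l.take j)‖₊ * ‖G (l.drop j)‖₊ * (iw (l.take j))⁻¹) ^ 2 := by
    have hj : ∀ j, iw (l.take j) * (‖F (l.take j)‖₊ * ‖G (l.drop j)‖₊ * (iw (l.take j))⁻¹)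
        = ‖F (l.take j)‖₊ * ‖G (l.drop j)‖₊ := fun j => by
      rw [mul_comm]
      exact inv_mul_cancel_right₀ (iw_ne_zero _) _
    have := nnreal_CS (Finset.range (l.length + 1)) (fun j => iw (l.take j))
      (fun j => ‖F (l.take j)‖₊ * ‖G (l.drop j)‖₊ * (iw (l.take j))⁻¹)
    refine le_trans (le_of_eq ?_) this
    congr 1
    exact Finset.sum_congr rfl fun j _ => (hj j).symm
  refine le_trans (mul_le_mul_left hCS _) (le_of_eq ?_)
  rw [mul_assoc]
  refine congrArg (HMul.hMul (∑ j ∈ Finset.range (l.length + 1), iw (l.take j) ^ 2)) ?_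
  rw [Finset.sum_mul]
  refine Finset.sum_congr rfl fun j _ => ?_
  have hl : iw l = iw (l.take j) * iw (l.drop j) := by
    rw [← iw_append, List.take_append_drop]
  rw [← NNReal.coe_inj]
  push_cast
  have htj : ((iw (l.take j) : ℝ)) ≠ 0 := by
    exact_mod_cast iw_ne_zero (l.take j)
  have hlj : (iw l : ℝ) = (iw (l.take j) : ℝ) * (iw (l.drop j) : ℝ) := by exact_mod_cast hl
  rw [hlj]
  field_simp
  ring

lemma EL_wick_le (F G : List ℕ → ℂ) (q : ℕ) :
    EL (q + 2) (LW F G) ≤ TE * (EL q F * EL (q + 2) G) := by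
  have key : ∀ l : List ℕ,
      ((‖LW F G l‖₊ ^ 2 * iw l ^ (q + 2) : ℝ≥0) : ℝ≥0∞) ≤
      TE * ∑ j ∈ Finset.range (l.length + 1),
        ((‖F (l.take j)‖₊ ^ 2 * iw (l.take j) ^ q : ℝ≥0) : ℝ≥0∞) *
        ((‖G (l.drop j)‖₊ ^ 2 * iw (l.drop j) ^ (q + 2) : ℝ≥0) : ℝ≥0∞) := by
    intro l
    calc ((‖LW F G l‖₊ ^ 2 * iw l ^ (q + 2) : ℝ≥0) : ℝ≥0∞)
        ≤ (((∑ j ∈ Finset.range (l.length + 1), iw (l.take j) ^ 2) *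
            ∑ j ∈ Finset.range (l.length + 1),
              (‖F (l.take j)‖₊ ^ 2 * iw (l.take j) ^ q) *
              (‖G (l.drop j)‖₊ ^ 2 * iw (l.drop j) ^ (q + 2)) : ℝ≥0) : ℝ≥0∞) :=
          ENNReal.coe_le_coe.2 (lw_pointwise F G q l)
      _ = (∑ j ∈ Finset.range (l.length + 1), ((iw (l.take j) : ℝ≥0∞)) ^ 2) *
            ∑ j ∈ Finset.range (l.length + 1),
              ((‖F (l.take j)‖₊ ^ 2 * iw (l.take j) ^ q : ℝ≥0) : ℝ≥0∞) *
              ((‖G (l.drop j)‖₊ ^ 2 * iw (l.drop j) ^ (q + 2) : ℝ≥0) : ℝ≥0∞) := by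
          push_cast
          rfl
      _ ≤ TE * ∑ j ∈ Finset.range (l.length + 1),
              ((‖F (l.take j)‖₊ ^ 2 * iw (l.take j) ^ q : ℝ≥0) : ℝ≥0∞) *
              ((‖G (l.drop j)‖₊ ^ 2 * iw (l.drop j) ^ (q + 2) : ℝ≥0) : ℝ≥0∞) :=
          mul_le_mul_left (prefix_le l) _
  calc EL (q + 2) (LW F G)
      ≤ ∑' l : List ℕ, TE * ∑ j ∈ Finset.range (l.length + 1),
          ((‖F (l.take j)‖₊ ^ 2 * iw (l.take j) ^ q : ℝ≥0) : ℝ≥0∞) *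
          ((‖G (l.drop j)‖₊ ^ 2 * iw (l.drop j) ^ (q + 2) : ℝ≥0) : ℝ≥0∞) :=
        ENNReal.tsum_le_tsum key
    _ = TE * ∑' l : List ℕ, ∑ j ∈ Finset.range (l.length + 1),
          ((‖F (l.take j)‖₊ ^ 2 * iw (l.take j) ^ q : ℝ≥0) : ℝ≥0∞) *
          ((‖G (l.drop j)‖₊ ^ 2 * iw (l.drop j) ^ (q + 2) : ℝ≥0) : ℝ≥0∞) := by
        rw [ENNReal.tsum_mul_left]
    _ = TE * (EL q F * EL (q + 2) G) := by
        rw [tsum_split (fun a b =>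
          ((‖F a‖₊ ^ 2 * iw a ^ q : ℝ≥0) : ℝ≥0∞) * ((‖G b‖₊ ^ 2 * iw b ^ (q + 2) : ℝ≥0) : ℝ≥0∞))]
        congr 1
        calc ∑' a : List ℕ, ∑' b : List ℕ,
              ((‖F a‖₊ ^ 2 * iw a ^ q : ℝ≥0) : ℝ≥0∞) * ((‖G b‖₊ ^ 2 * iw b ^ (q + 2) : ℝ≥0) : ℝ≥0∞)
            = ∑' a : List ℕ, ((‖F a‖₊ ^ 2 * iw a ^ q : ℝ≥0) : ℝ≥0∞) * EL (q + 2) G := by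
              congr 1
              funext a
              exact ENNReal.tsum_mul_left
          _ = EL q F * EL (q + 2) G := ENNReal.tsum_mul_right

lemma EL_LP_zero (F : List ℕ → ℂ) (p : ℕ) : EL p (LP F 0) ≤ 1 := by
  have h : ∀ l : List ℕ, ((‖LP F 0 l‖₊ ^ 2 * iw l ^ p : ℝ≥0) : ℝ≥0∞)
      = if l = [] then 1 else 0 := by
    intro l
    rcases eq_or_ne l [] with h | h
    · subst h; simp [LP]
    · simp [LP, h]
  rw [EL]
  calc (∑' l : List ℕ, ((‖LP F 0 l‖₊ ^ 2 * iw l ^ p : ℝ≥0) : ℝ≥0∞))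
      = ∑' l : List ℕ, if l = [] then (1 : ℝ≥0∞) else 0 := by
        congr 1; funext l; exact h l
    _ = 1 := by rw [tsum_ite_eq]
    _ ≤ 1 := le_rfl

lemma EL_LP_le (F : List ℕ → ℂ) (q n : ℕ) :
    EL (q + 2) (LP F n) ≤ (TE * EL q F) ^ n := by
  induction n with
  | zero => simpa using EL_LP_zero F (q + 2)
  | succ n ih =>
    have h1 : EL (q + 2) (LP F (n + 1)) = EL (q + 2) (LW F (LP F n)) := rfl
    rw [h1]
    refine (EL_wick_le F (LP F n) q).trans ?_
    calc TE * (EL q F * EL (q + 2) (LP F n)) ≤ TE * (EL q F * (TE * EL q F) ^ n) := by gcongr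
      _ = (TE * EL q F) ^ (n + 1) := by ring

lemma EL_tail (F : List ℕ → ℂ) (p k : ℕ) :
    EL (p + k) F ≤ ((‖F []‖₊ ^ 2 : ℝ≥0) : ℝ≥0∞) + (((2 : ℝ≥0)⁻¹ ^ k : ℝ≥0) : ℝ≥0∞) * EL p F := by
  rw [EL, ENNReal.tsum_eq_add_tsum_ite ([] : List ℕ)]
  refine add_le_add (le_of_eq ?_) ?_
  · norm_cast
    simp
  · refine le_trans (ENNReal.tsum_le_tsum (fun l => ?_)) (le_of_eq (ENNReal.tsum_mul_left (a := (((2 : ℝ≥0)⁻¹ ^ k : ℝ≥0) : ℝ≥0∞)) (f := fun l => ((‖F l‖₊ ^ 2 * iw l ^ p : ℝ≥0) : ℝ≥0∞))))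
    rcases eq_or_ne l [] with h | h
    · simp [h]
    · rw [if_neg h]
      have hb : (‖F l‖₊ ^ 2 * iw l ^ (p + k) : ℝ≥0) ≤ (2 : ℝ≥0)⁻¹ ^ k * (‖F l‖₊ ^ 2 * iw l ^ p) := by
        rw [pow_add]
        calc ‖F l‖₊ ^ 2 * (iw l ^ p * iw l ^ k)
            ≤ ‖F l‖₊ ^ 2 * (iw l ^ p * (2 : ℝ≥0)⁻¹ ^ k) := by
              gcongr
              exact iw_le_half h
          _ = (2 : ℝ≥0)⁻¹ ^ k * (‖F l‖₊ ^ 2 * iw l ^ p) := by ring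
      calc ((‖F l‖₊ ^ 2 * iw l ^ (p + k) : ℝ≥0) : ℝ≥0∞)
          ≤ (((2 : ℝ≥0)⁻¹ ^ k * (‖F l‖₊ ^ 2 * iw l ^ p) : ℝ≥0) : ℝ≥0∞) :=
            ENNReal.coe_le_coe.2 hb
        _ = (((2 : ℝ≥0)⁻¹ ^ k : ℝ≥0) : ℝ≥0∞) * ((‖F l‖₊ ^ 2 * iw l ^ p : ℝ≥0) : ℝ≥0∞) := by
            push_cast
            rfl

lemma sqrt_pow' (x : ℝ) (hx : 0 ≤ x) (n : ℕ) : Real.sqrt (x ^ n) = Real.sqrt x ^ n := by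
  induction n with
  | zero => simp
  | succ n ih => rw [pow_succ, pow_succ, Real.sqrt_mul (by positivity), ih]

end WickAux

set_option maxHeartbeats 1000000 in
/-- Let `φ(z) = ∑ φ_n z^n` converge absolutely on the open disk of radius `R`, and let
`f ∈ S̃₋₁` with `|E[f]| < R/B₂`, where `B₂ = (1 − 2^{-2} ζ(2))^{-1/2}`. Then
`φ(f) = ∑_n φ_n f^{⊗n}` converges (absolutely in norm, hence coefficientwise) in some
`L²(ℓ̃, μ_{-p})`, so it defines an element of `S̃₋₁`. -/
theorem wick_power_series (φ : ℕ → ℂ) (R : ℝ)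
    (hφ : ∀ r : ℝ, 0 ≤ r → r < R → Summable (fun n => ‖φ n‖ * r ^ n))
    (f : FreeMonoid ℕ → ℂ)
    (hf : ∃ p : ℕ, Summable (fun α => ‖f α‖ ^ 2 * ncWeight α ^ (-(p : ℤ))))
    (hE : ‖f 1‖ <
      R / Real.sqrt ((1 - (2 : ℝ) ^ (-2 : ℤ) * ∑' n : ℕ, ((n + 1 : ℝ)) ^ (-2 : ℤ))⁻¹)) :
    ∃ p : ℕ,
      (∀ n, Summable (fun γ => ‖wickPow f n γ‖ ^ 2 * ncWeight γ ^ (-(p : ℤ)))) ∧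
      Summable (fun n : ℕ => ‖φ n‖ *
        Real.sqrt (∑' γ, ‖wickPow f n γ‖ ^ 2 * ncWeight γ ^ (-(p : ℤ)))) ∧
      (∀ γ, Summable (fun n : ℕ => φ n * wickPow f n γ)) ∧
      Summable (fun γ : FreeMonoid ℕ =>
        ‖∑' n : ℕ, φ n * wickPow f n γ‖ ^ 2 * ncWeight γ ^ (-(p : ℤ))) := by
  classical
  open WickAux in
  obtain ⟨p₀, hp₀⟩ := hf
  have hp₀' : EL p₀ (fun l => f (FreeMonoid.ofList l)) ≠ ∞ := (bridge_summable f p₀).1 hp₀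
  -- the constant in `hE` is `√B2sq`
  have hEB : ‖f 1‖ < R / Real.sqrt B2sq := hE
  have hB2 : 0 < Real.sqrt B2sq := Real.sqrt_pos.2 B2sq_pos
  have hq0 : 0 < R / Real.sqrt B2sq := lt_of_le_of_lt (norm_nonneg _) hEB
  have hR : 0 < R := by
    have h1 : 0 < (R / Real.sqrt B2sq) * Real.sqrt B2sq := mul_pos hq0 hB2
    rwa [div_mul_cancel₀ _ hB2.ne'] at h1
  have hBsq : Real.sqrt B2sq ^ 2 = B2sq := Real.sq_sqrt B2sq_pos.le
  have hfB : ‖f 1‖ * Real.sqrt B2sq < R := (lt_div_iff₀ hB2).1 hEB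
  have hsq : B2sq * ‖f 1‖ ^ 2 < R ^ 2 := by
    have hm := mul_self_lt_mul_self (mul_nonneg (norm_nonneg (f 1)) hB2.le) hfB
    nlinarith [hm, hBsq]
  set ε : ℝ := (R ^ 2 / B2sq - ‖f 1‖ ^ 2) / 2 with hεdef
  have hflt : ‖f 1‖ ^ 2 < R ^ 2 / B2sq := by
    rw [lt_div_iff₀ B2sq_pos]; nlinarith [hsq]
  have hε : 0 < ε := by rw [hεdef]; linarith
  have hkey : B2sq * (‖f 1‖ ^ 2 + ε) < R ^ 2 := by
    have h2 : ‖f 1‖ ^ 2 + ε < R ^ 2 / B2sq := by rw [hεdef]; linarith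
    calc B2sq * (‖f 1‖ ^ 2 + ε) < B2sq * (R ^ 2 / B2sq) :=
          mul_lt_mul_of_pos_left h2 B2sq_pos
      _ = R ^ 2 := by rw [mul_comm, div_mul_cancel₀ _ B2sq_pos.ne']
  obtain ⟨k, hk⟩ := pow_unbounded_of_one_lt
    ((EL p₀ (fun l => f (FreeMonoid.ofList l))).toReal / ε) (one_lt_two (α := ℝ))
  have hCk : (EL p₀ (fun l => f (FreeMonoid.ofList l))).toReal ≤ ε * 2 ^ k := by
    have h3 := (div_lt_iff₀ hε).1 hk
    nlinarith [hε]
  set q : ℕ := p₀ + k with hqdef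
  have hELq : EL q (fun l => f (FreeMonoid.ofList l)) ≤ ENNReal.ofReal (‖f 1‖ ^ 2 + ε) := by
    refine (EL_tail (fun l => f (FreeMonoid.ofList l)) p₀ k).trans ?_
    have e1 : ((‖f 1‖₊ ^ 2 : ℝ≥0) : ℝ≥0∞) = ENNReal.ofReal (‖f 1‖ ^ 2) := by
      rw [ENNReal.ofReal_pow (norm_nonneg _), ofReal_norm, enorm_eq_nnnorm]
      push_cast
      rfl
    have e2 : (((2 : ℝ≥0)⁻¹ ^ k : ℝ≥0) : ℝ≥0∞) * EL p₀ (fun l => f (FreeMonoid.ofList l))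
        ≤ ENNReal.ofReal ε := by
      rw [← ENNReal.ofReal_toReal hp₀']
      rw [show (((2 : ℝ≥0)⁻¹ ^ k : ℝ≥0) : ℝ≥0∞) = ENNReal.ofReal (((2 : ℝ≥0)⁻¹ ^ k : ℝ≥0) : ℝ)
        from (ENNReal.ofReal_coe_nnreal).symm]
      rw [← ENNReal.ofReal_mul (by positivity)]
      refine ENNReal.ofReal_le_ofReal ?_
      have hcast : (((2 : ℝ≥0)⁻¹ ^ k : ℝ≥0) : ℝ) = (2 : ℝ)⁻¹ ^ k := by push_cast; norm_num
      rw [hcast]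
      have hfin : (2 : ℝ)⁻¹ ^ k * (ε * 2 ^ k) = ε := by
        rw [inv_pow]
        field_simp
      calc (2 : ℝ)⁻¹ ^ k * (EL p₀ (fun l => f (FreeMonoid.ofList l))).toReal
          ≤ (2 : ℝ)⁻¹ ^ k * (ε * 2 ^ k) := by
            refine mul_le_mul_of_nonneg_left hCk (by positivity)
        _ = ε := hfin
    calc ((‖(fun l => f (FreeMonoid.ofList l)) []‖₊ ^ 2 : ℝ≥0) : ℝ≥0∞)
          + (((2 : ℝ≥0)⁻¹ ^ k : ℝ≥0) : ℝ≥0∞) * EL p₀ (fun l => f (FreeMonoid.ofList l))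
        ≤ ENNReal.ofReal (‖f 1‖ ^ 2) + ENNReal.ofReal ε := by
          refine add_le_add (le_of_eq ?_) e2
          exact e1
      _ = ENNReal.ofReal (‖f 1‖ ^ 2 + ε) := (ENNReal.ofReal_add (by positivity) hε.le).symm
  set M₀ : ℝ≥0∞ := TE * EL q (fun l => f (FreeMonoid.ofList l)) with hM₀def
  have hM₀lt : M₀ < ENNReal.ofReal (R ^ 2) := by
    calc M₀ ≤ ENNReal.ofReal B2sq * ENNReal.ofReal (‖f 1‖ ^ 2 + ε) := by
          rw [hM₀def, TE_eq]
          exact mul_le_mul_right hELq _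
      _ = ENNReal.ofReal (B2sq * (‖f 1‖ ^ 2 + ε)) := (ENNReal.ofReal_mul B2sq_pos.le).symm
      _ < ENNReal.ofReal (R ^ 2) := by
          rw [ENNReal.ofReal_lt_ofReal_iff (by positivity)]
          exact hkey
  have hM₀ne : M₀ ≠ ∞ := (hM₀lt.trans ENNReal.ofReal_lt_top).ne
  set M : ℝ := M₀.toReal with hMdef
  have hM0 : 0 ≤ M := ENNReal.toReal_nonneg
  have hMlt : M < R ^ 2 := by
    rw [hMdef]
    exact ENNReal.toReal_lt_of_lt_ofReal hM₀lt
  have hsqrtM : Real.sqrt M < R := by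
    have h1 : Real.sqrt M < Real.sqrt (R ^ 2) := Real.sqrt_lt_sqrt hM0 hMlt
    rwa [Real.sqrt_sq hR.le] at h1
  -- the answer
  have hLPn : ∀ n : ℕ, (fun l => wickPow f n (FreeMonoid.ofList l))
      = LP (fun l => f (FreeMonoid.ofList l)) n := fun n => funext fun l => wickPow_ofList f n l
  have hn : ∀ n : ℕ, EL (q + 2) (LP (fun l => f (FreeMonoid.ofList l)) n) ≤ M₀ ^ n := fun n => by
    rw [hM₀def]
    exact EL_LP_le (fun l => f (FreeMonoid.ofList l)) q n
  have hnne : ∀ n : ℕ, EL (q + 2) (LP (fun l => f (FreeMonoid.ofList l)) n) ≠ ∞ := fun n =>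
    ((hn n).trans_lt (ENNReal.pow_lt_top hM₀ne.lt_top)).ne
  have cond1 : ∀ n : ℕ, Summable (fun γ : FreeMonoid ℕ =>
      ‖wickPow f n γ‖ ^ 2 * ncWeight γ ^ (-((q + 2 : ℕ) : ℤ))) := fun n => by
    refine (bridge_summable (wickPow f n) (q + 2)).2 ?_
    rw [hLPn n]
    exact hnne n
  have hrsum_eq : ∀ n : ℕ, (∑' γ : FreeMonoid ℕ, ‖wickPow f n γ‖ ^ 2 * ncWeight γ ^ (-((q + 2 : ℕ) : ℤ)))
      = (EL (q + 2) (LP (fun l => f (FreeMonoid.ofList l)) n)).toReal := fun n => by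
    rw [bridge_tsum (wickPow f n) (q + 2), hLPn n]
  have hrs_le : ∀ n : ℕ, (EL (q + 2) (LP (fun l => f (FreeMonoid.ofList l)) n)).toReal ≤ M ^ n := fun n => by
    have h := ENNReal.toReal_mono (ENNReal.pow_ne_top hM₀ne) (hn n)
    rwa [ENNReal.toReal_pow] at h
  have cond2 : Summable (fun n : ℕ => ‖φ n‖ *
      Real.sqrt (∑' γ : FreeMonoid ℕ, ‖wickPow f n γ‖ ^ 2 * ncWeight γ ^ (-((q + 2 : ℕ) : ℤ)))) := by
    refine Summable.of_nonneg_of_le (fun n => by positivity) (fun n => ?_)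
      (hφ (Real.sqrt M) (Real.sqrt_nonneg M) hsqrtM)
    rw [hrsum_eq n]
    have h1 : Real.sqrt ((EL (q + 2) (LP (fun l => f (FreeMonoid.ofList l)) n)).toReal)
        ≤ Real.sqrt (M ^ n) := Real.sqrt_le_sqrt (hrs_le n)
    rw [sqrt_pow' M hM0 n] at h1
    exact mul_le_mul_of_nonneg_left h1 (norm_nonneg _)
  have hnormsum : ∀ γ : FreeMonoid ℕ, Summable (fun n : ℕ => ‖φ n * wickPow f n γ‖) := by
    intro γ
    have hc : 0 < ncWeight γ ^ (-((q + 2 : ℕ) : ℤ)) := zpow_pos (ncWeight_pos γ) _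
    refine Summable.of_nonneg_of_le (fun n => norm_nonneg _) (fun n => ?_)
      (cond2.mul_left ((Real.sqrt (ncWeight γ ^ (-((q + 2 : ℕ) : ℤ))))⁻¹))
    rw [norm_mul]
    have h1 : ‖wickPow f n γ‖ ^ 2 * ncWeight γ ^ (-((q + 2 : ℕ) : ℤ))
        ≤ ∑' γ' : FreeMonoid ℕ, ‖wickPow f n γ'‖ ^ 2 * ncWeight γ' ^ (-((q + 2 : ℕ) : ℤ)) :=
      Summable.le_tsum (cond1 n) γ (fun γ' _ =>
        mul_nonneg (by positivity) (zpow_pos (ncWeight_pos γ') _).le)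
    have h2 : ‖wickPow f n γ‖ ≤ (Real.sqrt (ncWeight γ ^ (-((q + 2 : ℕ) : ℤ))))⁻¹ *
        Real.sqrt (∑' γ' : FreeMonoid ℕ, ‖wickPow f n γ'‖ ^ 2 * ncWeight γ' ^ (-((q + 2 : ℕ) : ℤ))) := by
      have h3 : ‖wickPow f n γ‖ ^ 2
          ≤ (∑' γ' : FreeMonoid ℕ, ‖wickPow f n γ'‖ ^ 2 * ncWeight γ' ^ (-((q + 2 : ℕ) : ℤ)))
            / ncWeight γ ^ (-((q + 2 : ℕ) : ℤ)) := (le_div_iff₀ hc).2 h1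
      have h4 : ‖wickPow f n γ‖ = Real.sqrt (‖wickPow f n γ‖ ^ 2) :=
        (Real.sqrt_sq (norm_nonneg _)).symm
      rw [h4]
      refine (Real.sqrt_le_sqrt h3).trans (le_of_eq ?_)
      rw [Real.sqrt_div (tsum_nonneg (fun γ' : FreeMonoid ℕ =>
        mul_nonneg (by positivity) (zpow_pos (ncWeight_pos γ') _).le)) _]
      rw [div_eq_inv_mul]
    calc ‖φ n‖ * ‖wickPow f n γ‖
        ≤ ‖φ n‖ * ((Real.sqrt (ncWeight γ ^ (-((q + 2 : ℕ) : ℤ))))⁻¹ *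
            Real.sqrt (∑' γ' : FreeMonoid ℕ, ‖wickPow f n γ'‖ ^ 2 * ncWeight γ' ^ (-((q + 2 : ℕ) : ℤ)))) :=
          mul_le_mul_of_nonneg_left h2 (norm_nonneg _)
      _ = (Real.sqrt (ncWeight γ ^ (-((q + 2 : ℕ) : ℤ))))⁻¹ *
            (‖φ n‖ * Real.sqrt (∑' γ' : FreeMonoid ℕ, ‖wickPow f n γ'‖ ^ 2 * ncWeight γ' ^ (-((q + 2 : ℕ) : ℤ)))) := by
          ring
  have cond3 : ∀ γ : FreeMonoid ℕ, Summable (fun n : ℕ => φ n * wickPow f n γ) :=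
    fun γ => Summable.of_norm (hnormsum γ)
  -- condition 4
  obtain ⟨r, hrpos, hrR, hMrR⟩ : ∃ r : ℝ, 0 < r ∧ r < R ∧ M / r < R := by
    clear hn hnne cond1 hrsum_eq hrs_le cond2 hnormsum cond3 hLPn hELq hM₀lt hM₀ne
    refine ⟨(M / R + R) / 2, ?_, ?_, ?_⟩
    · have hMRnn : 0 ≤ M / R := div_nonneg hM0 hR.le
      positivity
    · have hMRlt : M / R < R := (div_lt_iff₀ hR).2 (by nlinarith [hMlt])
      linarith
    · have hrgt : M / R < (M / R + R) / 2 := by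
        have hMRlt : M / R < R := (div_lt_iff₀ hR).2 (by nlinarith [hMlt])
        linarith
      have hrpos' : 0 < (M / R + R) / 2 := by
        have hMRnn : 0 ≤ M / R := div_nonneg hM0 hR.le
        positivity
      rw [div_lt_iff₀ hrpos']
      calc M = (M / R) * R := (div_mul_cancel₀ M hR.ne').symm
        _ < ((M / R + R) / 2) * R := mul_lt_mul_of_pos_right hrgt hR
        _ = R * ((M / R + R) / 2) := mul_comm _ _
  have hsum1 : Summable (fun n : ℕ => ‖φ n‖ * r ^ n) := hφ r hrpos.le hrR
  have hsum2 : Summable (fun n : ℕ => ‖φ n‖ * (M / r) ^ n) :=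
    hφ _ (div_nonneg hM0 hrpos.le) hMrR
  set c : ℕ → ℝ≥0∞ := fun n => ENNReal.ofReal (‖φ n‖ * r ^ n) with hcdef
  have hKne : (∑' n : ℕ, c n) ≠ ∞ := by
    rw [hcdef, ← ENNReal.ofReal_tsum_of_nonneg (fun n => by positivity) hsum1]
    exact ENNReal.ofReal_ne_top
  have hnn : ∀ γ : FreeMonoid ℕ, Summable (fun n : ℕ => ‖φ n * wickPow f n γ‖₊) := fun γ =>
    NNReal.summable_coe.1 (by simpa using hnormsum γ)
  set A : ℕ → List ℕ → ℝ≥0∞ :=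
    fun n l => ((‖φ n‖₊ * ‖LP (fun a => f (FreeMonoid.ofList a)) n l‖₊ : ℝ≥0) : ℝ≥0∞) with hAdef
  have hptw : ∀ l : List ℕ,
      ((‖(∑' n : ℕ, φ n * wickPow f n (FreeMonoid.ofList l))‖₊ ^ 2 * iw l ^ (q + 2) : ℝ≥0) : ℝ≥0∞)
      ≤ (∑' n : ℕ, A n l) ^ 2 * ((iw l : ℝ≥0∞)) ^ (q + 2) := by
    intro l
    have h2 : ‖(∑' n : ℕ, φ n * wickPow f n (FreeMonoid.ofList l))‖₊
        ≤ ∑' n : ℕ, ‖φ n * wickPow f n (FreeMonoid.ofList l)‖₊ := nnnorm_tsum_le (hnn _)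
    have h1 : ((‖(∑' n : ℕ, φ n * wickPow f n (FreeMonoid.ofList l))‖₊ : ℝ≥0) : ℝ≥0∞)
        ≤ ∑' n : ℕ, A n l := by
      calc ((‖(∑' n : ℕ, φ n * wickPow f n (FreeMonoid.ofList l))‖₊ : ℝ≥0) : ℝ≥0∞)
          ≤ (((∑' n : ℕ, ‖φ n * wickPow f n (FreeMonoid.ofList l)‖₊ : ℝ≥0)) : ℝ≥0∞) :=
            ENNReal.coe_le_coe.2 h2
        _ = ∑' n : ℕ, A n l := by
            rw [ENNReal.coe_tsum (hnn _)]
            congr 1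
            funext n
            rw [hAdef]
            have hw := wickPow_ofList f n l
            rw [nnnorm_mul, hw]
    calc ((‖(∑' n : ℕ, φ n * wickPow f n (FreeMonoid.ofList l))‖₊ ^ 2 * iw l ^ (q + 2) : ℝ≥0) : ℝ≥0∞)
        = ((‖(∑' n : ℕ, φ n * wickPow f n (FreeMonoid.ofList l))‖₊ : ℝ≥0) : ℝ≥0∞) ^ 2
            * ((iw l : ℝ≥0∞)) ^ (q + 2) := by
          push_cast
          rfl
      _ ≤ (∑' n : ℕ, A n l) ^ 2 * ((iw l : ℝ≥0∞)) ^ (q + 2) := by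
          gcongr
  have hc0 : ∀ n : ℕ, c n = 0 → ∀ l : List ℕ, A n l = 0 := by
    intro n h l
    rw [hcdef] at h
    have h' := ENNReal.ofReal_eq_zero.1 h
    have hrn : 0 < r ^ n := pow_pos hrpos n
    have hφn : ‖φ n‖ = 0 := by nlinarith [norm_nonneg (φ n)]
    have hφn' : ‖φ n‖₊ = 0 := by
      ext
      simpa using hφn
    rw [hAdef]
    simp [hφn']
  have hCS : ∀ l : List ℕ, (∑' n : ℕ, A n l) ^ 2 ≤ (∑' n : ℕ, c n) * ∑' n : ℕ, (A n l) ^ 2 / c n :=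
    fun l => ennreal_CS_tsum (fun n => A n l) c (fun n => ENNReal.ofReal_ne_top)
      (fun n h => hc0 n h l)
  have hb3 : ∀ n : ℕ, (∑' l : List ℕ, (A n l) ^ 2 * ((iw l : ℝ≥0∞)) ^ (q + 2)) / c n
      ≤ ENNReal.ofReal (‖φ n‖ * (M / r) ^ n) := by
    intro n
    have hAl : ∀ l : List ℕ, (A n l) ^ 2 * ((iw l : ℝ≥0∞)) ^ (q + 2)
        = ((‖φ n‖₊ ^ 2 : ℝ≥0) : ℝ≥0∞)
          * ((‖LP (fun a => f (FreeMonoid.ofList a)) n l‖₊ ^ 2 * iw l ^ (q + 2) : ℝ≥0) : ℝ≥0∞) := by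
      intro l
      rw [hAdef]
      push_cast
      ring
    have hAsum : (∑' l : List ℕ, (A n l) ^ 2 * ((iw l : ℝ≥0∞)) ^ (q + 2))
        = ((‖φ n‖₊ ^ 2 : ℝ≥0) : ℝ≥0∞) * EL (q + 2) (LP (fun a => f (FreeMonoid.ofList a)) n) := by
      calc (∑' l : List ℕ, (A n l) ^ 2 * ((iw l : ℝ≥0∞)) ^ (q + 2))
          = ∑' l : List ℕ, ((‖φ n‖₊ ^ 2 : ℝ≥0) : ℝ≥0∞)
              * ((‖LP (fun a => f (FreeMonoid.ofList a)) n l‖₊ ^ 2 * iw l ^ (q + 2) : ℝ≥0) : ℝ≥0∞) := by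
            congr 1
            funext l
            exact hAl l
        _ = _ := ENNReal.tsum_mul_left
    rcases eq_or_ne (‖φ n‖₊) 0 with h | h
    · rw [hAsum, h]
      simp
    · have hφpos : 0 < ‖φ n‖ := by
        rcases (norm_nonneg (φ n)).lt_or_eq with h' | h'
        · exact h'
        · exact absurd (by ext; simpa using h'.symm : ‖φ n‖₊ = 0) h
      have hM₀r : M₀ = ENNReal.ofReal M := (ENNReal.ofReal_toReal hM₀ne).symm
      have hle1 : ((‖φ n‖₊ ^ 2 : ℝ≥0) : ℝ≥0∞) * EL (q + 2) (LP (fun a => f (FreeMonoid.ofList a)) n)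
          ≤ ENNReal.ofReal (‖φ n‖ ^ 2 * M ^ n) := by
        calc ((‖φ n‖₊ ^ 2 : ℝ≥0) : ℝ≥0∞) * EL (q + 2) (LP (fun a => f (FreeMonoid.ofList a)) n)
            ≤ ((‖φ n‖₊ ^ 2 : ℝ≥0) : ℝ≥0∞) * M₀ ^ n := mul_le_mul_right (hn n) _
          _ = ENNReal.ofReal (‖φ n‖ ^ 2) * ENNReal.ofReal (M ^ n) := by
              rw [hM₀r, ← ENNReal.ofReal_pow hM0]
              congr 1
              rw [ENNReal.ofReal_pow (norm_nonneg _), ofReal_norm, enorm_eq_nnnorm]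
              push_cast
              rfl
          _ = ENNReal.ofReal (‖φ n‖ ^ 2 * M ^ n) := (ENNReal.ofReal_mul (by positivity)).symm
      calc (∑' l : List ℕ, (A n l) ^ 2 * ((iw l : ℝ≥0∞)) ^ (q + 2)) / c n
          ≤ ENNReal.ofReal (‖φ n‖ ^ 2 * M ^ n) / ENNReal.ofReal (‖φ n‖ * r ^ n) := by
            rw [hAsum, hcdef]
            exact ENNReal.div_le_div_right (hle1) _
        _ = ENNReal.ofReal ((‖φ n‖ ^ 2 * M ^ n) / (‖φ n‖ * r ^ n)) := by
            rw [ENNReal.ofReal_div_of_pos (by positivity)]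
        _ = ENNReal.ofReal (‖φ n‖ * (M / r) ^ n) := by
            congr 1
            have hd1 : ‖φ n‖ ≠ 0 := hφpos.ne'
            rw [div_pow, sq, mul_assoc, mul_div_mul_left _ _ hd1, mul_div_assoc]
  have hb4 : (∑' n : ℕ, (∑' l : List ℕ, (A n l) ^ 2 * ((iw l : ℝ≥0∞)) ^ (q + 2)) / c n)
      ≤ ENNReal.ofReal (∑' n : ℕ, ‖φ n‖ * (M / r) ^ n) := by
    rw [ENNReal.ofReal_tsum_of_nonneg (fun n => by positivity) hsum2]
    exact ENNReal.tsum_le_tsum hb3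
  have hmain : EL (q + 2) (fun l => (∑' n : ℕ, φ n * wickPow f n (FreeMonoid.ofList l))) ≠ ∞ := by
    have hb1 : EL (q + 2) (fun l => (∑' n : ℕ, φ n * wickPow f n (FreeMonoid.ofList l)))
        ≤ ∑' l : List ℕ, ((∑' n : ℕ, c n) * ∑' n : ℕ, (A n l) ^ 2 / c n)
            * ((iw l : ℝ≥0∞)) ^ (q + 2) := by
      rw [EL]
      refine ENNReal.tsum_le_tsum fun l => ?_
      exact (hptw l).trans (mul_le_mul_left (hCS l) _)
    have hb2 : (∑' l : List ℕ, ((∑' n : ℕ, c n) * ∑' n : ℕ, (A n l) ^ 2 / c n)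
            * ((iw l : ℝ≥0∞)) ^ (q + 2))
        = (∑' n : ℕ, c n) * ∑' n : ℕ,
            (∑' l : List ℕ, (A n l) ^ 2 * ((iw l : ℝ≥0∞)) ^ (q + 2)) / c n := by
      calc (∑' l : List ℕ, ((∑' n : ℕ, c n) * ∑' n : ℕ, (A n l) ^ 2 / c n)
              * ((iw l : ℝ≥0∞)) ^ (q + 2))
          = ∑' l : List ℕ, (∑' n : ℕ, c n)
              * ((∑' n : ℕ, (A n l) ^ 2 / c n) * ((iw l : ℝ≥0∞)) ^ (q + 2)) := by
            congr 1
            funext l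
            ring
        _ = (∑' n : ℕ, c n) * ∑' l : List ℕ,
              (∑' n : ℕ, (A n l) ^ 2 / c n) * ((iw l : ℝ≥0∞)) ^ (q + 2) := ENNReal.tsum_mul_left
        _ = (∑' n : ℕ, c n) * ∑' l : List ℕ,
              ∑' n : ℕ, ((A n l) ^ 2 / c n) * ((iw l : ℝ≥0∞)) ^ (q + 2) := by
            refine congrArg _ ?_
            refine tsum_congr fun l => ?_
            exact ENNReal.tsum_mul_right.symm
        _ = (∑' n : ℕ, c n) * ∑' n : ℕ,
              ∑' l : List ℕ, ((A n l) ^ 2 / c n) * ((iw l : ℝ≥0∞)) ^ (q + 2) := by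
            rw [ENNReal.tsum_comm]
        _ = (∑' n : ℕ, c n) * ∑' n : ℕ,
              (∑' l : List ℕ, (A n l) ^ 2 * ((iw l : ℝ≥0∞)) ^ (q + 2)) / c n := by
            refine congrArg _ ?_
            refine tsum_congr fun n => ?_
            rw [div_eq_mul_inv, ← ENNReal.tsum_mul_right]
            refine tsum_congr fun l => ?_
            rw [div_eq_mul_inv]
            ring
    have hfinal : EL (q + 2) (fun l => (∑' n : ℕ, φ n * wickPow f n (FreeMonoid.ofList l)))
        ≤ (∑' n : ℕ, c n) * ENNReal.ofReal (∑' n : ℕ, ‖φ n‖ * (M / r) ^ n) :=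
      (hb1.trans (le_of_eq hb2)).trans (mul_le_mul_right hb4 _)
    exact ne_top_of_le_ne_top (ENNReal.mul_ne_top hKne ENNReal.ofReal_ne_top) hfinal
  have cond4 : Summable (fun γ : FreeMonoid ℕ =>
      ‖∑' n : ℕ, φ n * wickPow f n γ‖ ^ 2 * ncWeight γ ^ (-((q + 2 : ℕ) : ℤ))) :=
    (bridge_summable (fun γ => ∑' n : ℕ, φ n * wickPow f n γ) (q + 2)).2 hmain
  exact ⟨q + 2, cond1, cond2, cond3, cond4⟩
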